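/- (Maclaurin-type inequality) For positive integers r ≤ n and positive reals x_1,...,x_n, the elementary symmetric sum of degree r satisfies e_r(x_1,...,x_n) ≤ C(n,r)·((x_1+⋯+x_n)/n)^r. -/

import Mathlib

open Finset

section Aux

variable {ι : Type*} [DecidableEq ι] (x : ι → ℝ)

/-- elementary symmetric sum over a finset -/
noncomputable def esum (t : Finset ι) (k : ℕ) : ℝ :=
  ∑ s ∈ t.powersetCard k, ∏ i ∈ s, x i

lemma esum_nonneg (hx : ∀ i, 0 ≤ x i) (t : Finset ι) (k : ℕ) : 0 ≤ esum x t k :=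
  Finset.sum_nonneg fun s _ => Finset.prod_nonneg fun i _ => hx i

lemma esum_zero (t : Finset ι) : esum x t 0 = 1 := by
  simp [esum, Finset.powersetCard_zero]

lemma esum_one (t : Finset ι) : esum x t 1 = ∑ i ∈ t, x i := by
  simp [esum, Finset.powersetCard_one, Finset.sum_map]

lemma esum_insert {a : ι} {t : Finset ι} (ha : a ∉ t) (k : ℕ) :
    esum x (insert a t) (k + 1) = esum x t (k + 1) + x a * esum x t k := by
  unfold esum
  rw [Finset.powersetCard_succ_insert ha, Finset.sum_union]
  · congr 1
    rw [Finset.sum_image (by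
      intro s hs s' hs' h
      simp only [Finset.mem_coe, Finset.mem_powersetCard] at hs hs'
      have has : a ∉ s := fun h' => ha (hs.1 h')
      have has' : a ∉ s' := fun h' => ha (hs'.1 h')
      rw [← Finset.erase_insert has, h, Finset.erase_insert has']), Finset.mul_sum]
    refine Finset.sum_congr rfl fun s hs => ?_
    simp only [Finset.mem_powersetCard] at hs
    rw [Finset.prod_insert fun h' => ha (hs.1 h')]
  · rw [Finset.disjoint_right]
    intro s hs hs'
    simp only [Finset.mem_image, Finset.mem_powersetCard] at hs hs'
    obtain ⟨u, hu, rfl⟩ := hs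
    exact ha (hs'.1 (Finset.mem_insert_self a u))

/-- double counting: ∑_i x i * e_k(t \ i) = (k+1) e_{k+1}(t) -/
lemma esum_erase_sum (t : Finset ι) (k : ℕ) :
    ∑ i ∈ t, x i * esum x (t.erase i) k = (k + 1 : ℝ) * esum x t (k + 1) := by
  unfold esum
  have hR : (k + 1 : ℝ) * ∑ s ∈ t.powersetCard (k + 1), ∏ i ∈ s, x i
      = ∑ p ∈ (t.powersetCard (k + 1)).sigma (fun u => u), ∏ j ∈ p.1, x j := by
    rw [Finset.sum_sigma, Finset.mul_sum]
    refine Finset.sum_congr rfl fun s hs => ?_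
    simp only [Finset.mem_powersetCard] at hs
    rw [show (∑ p ∈ s, ∏ j ∈ (⟨s, p⟩ : (_ : Finset ι) × ι).fst, x j)
        = ∑ _p ∈ s, ∏ j ∈ s, x j from Finset.sum_congr rfl fun _ _ => rfl,
      Finset.sum_const, hs.2, nsmul_eq_mul]
    push_cast
    ring
  have hL : ∑ i ∈ t, x i * ∑ s ∈ (t.erase i).powersetCard k, ∏ j ∈ s, x j
      = ∑ p ∈ t.sigma (fun i => (t.erase i).powersetCard k), x p.1 * ∏ j ∈ p.2, x j := by
    rw [Finset.sum_sigma]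
    exact Finset.sum_congr rfl fun i _ => by rw [Finset.mul_sum]
  rw [hL, hR]
  refine Finset.sum_nbij' (fun p => ⟨insert p.1 p.2, p.1⟩) (fun p => ⟨p.2, p.1.erase p.2⟩)
    ?_ ?_ ?_ ?_ ?_
  · rintro ⟨i, s⟩ hp
    simp only [Finset.mem_sigma, Finset.mem_powersetCard] at hp ⊢
    obtain ⟨hi, hs, hcard⟩ := hp
    have his : i ∉ s := fun h => (Finset.mem_erase.mp (hs h)).1 rfl
    refine ⟨⟨Finset.insert_subset hi (hs.trans (Finset.erase_subset _ _)), ?_⟩,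
      Finset.mem_insert_self _ _⟩
    rw [Finset.card_insert_of_notMem his, hcard]
  · rintro ⟨u, i⟩ hp
    simp only [Finset.mem_sigma, Finset.mem_powersetCard] at hp ⊢
    obtain ⟨⟨hu, hcard⟩, hi⟩ := hp
    refine ⟨hu hi, fun j hj => ?_, ?_⟩
    · simp only [Finset.mem_erase] at hj ⊢
      exact ⟨hj.1, hu hj.2⟩
    · rw [Finset.card_erase_of_mem hi, hcard]; rfl
  · rintro ⟨i, s⟩ hp
    simp only [Finset.mem_sigma, Finset.mem_powersetCard] at hp
    have his : i ∉ s := fun h => (Finset.mem_erase.mp (hp.2.1 h)).1 rfl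
    simp [Finset.erase_insert his]
  · rintro ⟨u, i⟩ hp
    simp only [Finset.mem_sigma, Finset.mem_powersetCard] at hp
    simp [Finset.insert_erase hp.2]
  · rintro ⟨i, s⟩ hp
    simp only [Finset.mem_sigma, Finset.mem_powersetCard] at hp
    have his : i ∉ s := fun h => (Finset.mem_erase.mp (hp.2.1 h)).1 rfl
    rw [Finset.prod_insert his]

end Aux

section Key

variable {n : ℕ} (x : Fin n → ℝ) (hx : ∀ i, 0 < x i)

/-- Monovariance fact: x i and x i * e_k(univ \ i) monovary. -/
lemma key_monovary (hx : ∀ i, 0 < x i) (k : ℕ) :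
    Monovary (fun i => x i) (fun i => x i * esum x (Finset.univ.erase i) k) := by
  intro i j hij
  by_contra h
  push_neg at h
  -- h : x j < x i ; hij : x j * E j < x i * E i ... need contradiction
  -- show x i * E i ≥ x j * E j when x i ≥ x j
  have hij' : x j * esum x (Finset.univ.erase j) k
      ≤ x i * esum x (Finset.univ.erase i) k := by
    have hne : i ≠ j := by rintro rfl; exact lt_irrefl _ h
    cases k with
    | zero => simpa [esum_zero] using h.le
    | succ m =>
      have hji : j ∈ (Finset.univ : Finset (Fin n)).erase i := by simp [hne.symm]
      have hijm : i ∈ (Finset.univ : Finset (Fin n)).erase j := by simp [hne]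
      have e1 : (Finset.univ : Finset (Fin n)).erase i
          = insert j (((Finset.univ : Finset (Fin n)).erase i).erase j) :=
        (Finset.insert_erase hji).symm
      have e2 : (Finset.univ : Finset (Fin n)).erase j
          = insert i (((Finset.univ : Finset (Fin n)).erase j).erase i) :=
        (Finset.insert_erase hijm).symm
      have hcomm : ((Finset.univ : Finset (Fin n)).erase i).erase j
          = ((Finset.univ : Finset (Fin n)).erase j).erase i := Finset.erase_right_comm
      set A := esum x (((Finset.univ : Finset (Fin n)).erase i).erase j) (m + 1) with hA
      set B := esum x (((Finset.univ : Finset (Fin n)).erase i).erase j) m with hB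
      have d1 : esum x ((Finset.univ : Finset (Fin n)).erase i) (m + 1) = A + x j * B := by
        rw [e1, esum_insert x (by simp) m]
      have d2 : esum x ((Finset.univ : Finset (Fin n)).erase j) (m + 1) = A + x i * B := by
        rw [e2, esum_insert x (by simp) m, ← hcomm]
      have hA0 : 0 ≤ A := esum_nonneg x (fun i => (hx i).le) _ _
      rw [d1, d2]
      nlinarith [h.le]
  exact absurd hij (not_lt.mpr hij')

/-- Key inequality: n * r * e_r ≤ (n - r + 1) * S * e_{r-1} for r = k + 2. -/
lemma key_ineq (hx : ∀ i, 0 < x i) (k : ℕ) :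
    (n : ℝ) * (k + 2) * esum x Finset.univ (k + 2)
      ≤ ((n : ℝ) - (k + 1)) * (∑ i, x i) * esum x Finset.univ (k + 1) := by
  set S := ∑ i, x i with hS
  -- identity: S * E_{k+1} = (k+2) E_{k+2} + ∑ x_i^2 E_i
  have split : ∀ i : Fin n, esum x Finset.univ (k + 1)
      = esum x (Finset.univ.erase i) (k + 1) + x i * esum x (Finset.univ.erase i) k := by
    intro i
    conv_lhs => rw [← Finset.insert_erase (Finset.mem_univ i)]
    rw [esum_insert x (Finset.notMem_erase i _) k]
  have id1 : ∑ i, x i * esum x (Finset.univ.erase i) (k + 1)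
      = (k + 2 : ℝ) * esum x Finset.univ (k + 2) := by
    have := esum_erase_sum x (Finset.univ : Finset (Fin n)) (k + 1)
    push_cast at this ⊢
    convert this using 2 <;> ring
  have id2 : ∑ i, x i * esum x (Finset.univ.erase i) k
      = (k + 1 : ℝ) * esum x Finset.univ (k + 1) := by
    have := esum_erase_sum x (Finset.univ : Finset (Fin n)) k
    push_cast at this ⊢
    exact this
  have idmain : S * esum x Finset.univ (k + 1)
      = (k + 2 : ℝ) * esum x Finset.univ (k + 2)
        + ∑ i, x i ^ 2 * esum x (Finset.univ.erase i) k := by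
    calc S * esum x Finset.univ (k + 1)
        = ∑ i, x i * esum x Finset.univ (k + 1) := by rw [hS, Finset.sum_mul]
      _ = ∑ i, (x i * esum x (Finset.univ.erase i) (k + 1)
            + x i ^ 2 * esum x (Finset.univ.erase i) k) := by
          refine Finset.sum_congr rfl fun i _ => ?_
          rw [split i]; ring
      _ = _ := by rw [Finset.sum_add_distrib, id1]
  -- Chebyshev
  have cheb := ((key_monovary x hx k).monovaryOn (Finset.univ : Finset (Fin n))
    |>.sum_mul_sum_le_card_mul_sum)
  simp only [Finset.card_univ, Fintype.card_fin] at cheb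
  have cheb' : S * ((k + 1 : ℝ) * esum x Finset.univ (k + 1))
      ≤ (n : ℝ) * ∑ i, x i ^ 2 * esum x (Finset.univ.erase i) k := by
    calc S * ((k + 1 : ℝ) * esum x Finset.univ (k + 1))
        = (∑ i, x i) * ∑ i, x i * esum x (Finset.univ.erase i) k := by rw [id2, hS]
      _ ≤ (n : ℝ) * ∑ i, x i * (x i * esum x (Finset.univ.erase i) k) := cheb
      _ = (n : ℝ) * ∑ i, x i ^ 2 * esum x (Finset.univ.erase i) k := by
          congr 1; exact Finset.sum_congr rfl fun i _ => by ring
  have sumsq : ∑ i, x i ^ 2 * esum x (Finset.univ.erase i) k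
      = S * esum x Finset.univ (k + 1) - (k + 2 : ℝ) * esum x Finset.univ (k + 2) := by
    linarith [idmain]
  rw [sumsq] at cheb'
  nlinarith [cheb', sq_nonneg ((n:ℝ) - k)]

end Key

theorem stmt3 (n r : ℕ) (hr : 0 < r) (hrn : r ≤ n) (x : Fin n → ℝ)
    (hx : ∀ i, 0 < x i) :
    ∑ s ∈ Finset.univ.powersetCard r, ∏ i ∈ s, x i
      ≤ (n.choose r : ℝ) * ((∑ i, x i) / n) ^ r := by
  have hn : 0 < n := lt_of_lt_of_le hr hrn
  have hn' : (0 : ℝ) < n := by exact_mod_cast hn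
  have hS : 0 < ∑ i, x i := Finset.sum_pos (fun i _ => hx i) (by
    simpa using Finset.univ_nonempty_iff.mpr (Fin.pos_iff_nonempty.mp hn))
  set S := ∑ i, x i with hSdef
  suffices h : esum x Finset.univ r ≤ (n.choose r : ℝ) * (S / n) ^ r by exact h
  clear_value S
  induction r with
  | zero => exact absurd hr (lt_irrefl 0)
  | succ m ih =>
    cases m with
    | zero =>
      rw [esum_one]
      have : (n.choose 1 : ℝ) * (S / n) ^ 1 = S := by
        rw [Nat.choose_one_right, pow_one]
        field_simp
      rw [← hSdef]
      simpa using this.ge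
    | succ k =>
      -- r = k + 2
      have hk1n : (k : ℕ) + 1 ≤ n := le_trans (Nat.le_succ _) hrn
      have ihm := ih (Nat.succ_pos k) (le_trans (Nat.le_succ _) hrn)
      have key := key_ineq x hx k
      rw [← hSdef] at key
      -- e_{k+2} ≤ (n - k - 1) * S * e_{k+1} / (n (k+2))
      have hden : (0 : ℝ) < (n : ℝ) * (k + 2) := by positivity
      have hnk : (0 : ℝ) ≤ (n : ℝ) - (k + 1) := by
        have : ((k : ℝ) + 1) ≤ n := by exact_mod_cast hk1n
        linarith
      have step1 : esum x Finset.univ (k + 2)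
          ≤ ((n : ℝ) - (k + 1)) * S * esum x Finset.univ (k + 1) / ((n : ℝ) * (k + 2)) := by
        rw [le_div_iff₀ hden]
        nlinarith [key]
      have step2 : ((n : ℝ) - (k + 1)) * S * esum x Finset.univ (k + 1)
          ≤ ((n : ℝ) - (k + 1)) * S * ((n.choose (k + 1) : ℝ) * (S / n) ^ (k + 1)) := by
        apply mul_le_mul_of_nonneg_left ihm (by positivity)
      have choose_id : ((n.choose (k + 2) : ℝ)) * (k + 2) = (n.choose (k + 1)) * ((n : ℝ) - (k + 1)) := by
        have h1 : n.choose (k + 2) * (k + 2) = n.choose (k + 1) * (n - (k + 1)) :=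
          Nat.choose_succ_right_eq n (k + 1)
        have h2 : ((n - (k + 1) : ℕ) : ℝ) = (n : ℝ) - (k + 1) := by
          rw [Nat.cast_sub hk1n]; push_cast; ring
        calc ((n.choose (k + 2) : ℝ)) * (k + 2)
            = ((n.choose (k + 2) * (k + 2) : ℕ) : ℝ) := by push_cast; ring
          _ = ((n.choose (k + 1) * (n - (k + 1)) : ℕ) : ℝ) := by rw [h1]
          _ = (n.choose (k + 1)) * ((n : ℝ) - (k + 1)) := by rw [Nat.cast_mul, h2]
      calc esum x Finset.univ (k + 2)
          ≤ ((n : ℝ) - (k + 1)) * S * esum x Finset.univ (k + 1) / ((n : ℝ) * (k + 2)) := step1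
        _ ≤ ((n : ℝ) - (k + 1)) * S * ((n.choose (k + 1) : ℝ) * (S / n) ^ (k + 1)) / ((n : ℝ) * (k + 2)) := by
            gcongr
        _ = (n.choose (k + 2) : ℝ) * (S / n) ^ (k + 2) := by
            rw [div_eq_iff (ne_of_gt hden), pow_succ]
            have hPn : (S / (n : ℝ)) * n = S := div_mul_cancel₀ _ (ne_of_gt hn')
            linear_combination (-(S * (S / (n : ℝ)) ^ (k + 1))) * choose_id +
              (-((n.choose (k + 2) : ℝ) * ((k : ℝ) + 2) * (S / (n : ℝ)) ^ (k + 1))) * hPn
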